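/- For the grammar with productions S → AB, A → C, B → C, C → aC, C → ε, and input a^n, the Earley algorithm table contains exactly n+1 items of the form [S → A • B] ∈ E_{0,i} (for 0 ≤ i ≤ n) and exactly n+1 items of the form [S → AB •] ∈ E_{0,j} (for 0 ≤ j ≤ n). -/

import Mathlib

/-! Formalization of Earley parsing and the Nederhof–Satta variant. -/

variable {T N : Type}

/-- A context-free grammar: a start nonterminal and a set of productions. -/
structure CFG (T N : Type) where
  initial : N
  rules : Set (N × List (Symbol T N))

/-- One rewriting step of the grammar. -/
def CFG.Produces (g : CFG T N) (u v : List (Symbol T N)) : Prop :=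
  ∃ A α p q, (A, α) ∈ g.rules ∧ u = p ++ [Symbol.nonterminal A] ++ q ∧ v = p ++ α ++ q

/-- The derivation relation ⇒* (reflexive-transitive closure of rewriting). -/
def CFG.Derives (g : CFG T N) : List (Symbol T N) → List (Symbol T N) → Prop :=
  Relation.ReflTransGen g.Produces

/-- The language of the grammar: { w | S ⇒* w }. -/
def CFG.language (g : CFG T N) : Set (List T) :=
  { w | g.Derives [Symbol.nonterminal g.initial] (w.map Symbol.terminal) }

/-- `inputSlice w i j` is the substring a_{i+1}⋯a_j of `w` (0-based: w[i..j)), as symbols. -/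
def inputSlice (w : List T) (i j : ℕ) : List (Symbol T N) :=
  ((w.take j).drop i).map Symbol.terminal

/-- The least Earley table: `Earley g w A α β i j` means the dotted item
[A → α • β] is inserted in E_{i,j}. -/
inductive Earley (g : CFG T N) (w : List T) :
    N → List (Symbol T N) → List (Symbol T N) → ℕ → ℕ → Prop where
  | init {α} : (g.initial, α) ∈ g.rules → Earley g w g.initial [] α 0 0
  | predict {B α A β i j γ} : Earley g w B α (Symbol.nonterminal A :: β) i j →
      (A, γ) ∈ g.rules → Earley g w A [] γ j j
  | scan {A α a β i j} : Earley g w A α (Symbol.terminal a :: β) i j →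
      w[j]? = some a → Earley g w A (α ++ [Symbol.terminal a]) β i (j + 1)
  | complete {A α B β i k γ j} : Earley g w A α (Symbol.nonterminal B :: β) i k →
      Earley g w B γ [] k j → (B, γ) ∈ g.rules →
      Earley g w A (α ++ [Symbol.nonterminal B]) β i j

mutual
  /-- Forward part of the variant: `VarU g w β j` means suffix item [β] ∈ U_j. -/
  inductive VarU (g : CFG T N) (w : List T) : List (Symbol T N) → ℕ → Prop where
    | init {α} : (g.initial, α) ∈ g.rules → VarU g w α 0
    | predict {A β j γ} : VarU g w (Symbol.nonterminal A :: β) j →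
        (A, γ) ∈ g.rules → VarU g w γ j
    | scan {a β j} : VarU g w (Symbol.terminal a :: β) j → w[j]? = some a →
        VarU g w β (j + 1)
    | complete {B β k γ j} : VarU g w (Symbol.nonterminal B :: β) k → (B, γ) ∈ g.rules →
        VarT g w γ k j → VarU g w β j

  /-- Backward part of the variant: `VarT g w β j m` means suffix item [β] ∈ T_{j,m}. -/
  inductive VarT (g : CFG T N) (w : List T) : List (Symbol T N) → ℕ → ℕ → Prop where
    | empty {m} : VarU g w [] m → VarT g w [] m m
    | scan {a β j m} : VarU g w (Symbol.terminal a :: β) j → w[j]? = some a →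
        VarT g w β (j + 1) m → VarT g w (Symbol.terminal a :: β) j m
    | complete {B β k γ j m} : VarU g w (Symbol.nonterminal B :: β) k → (B, γ) ∈ g.rules →
        VarT g w γ k j → VarT g w β j m → VarT g w (Symbol.nonterminal B :: β) k m
end

/-- Nonterminals of the example grammar. -/
inductive NT : Type where
  | S : NT
  | A : NT
  | B : NT
  | C : NT

/-- The example grammar with productions S → AB, A → C, B → C, C → aC, C → ε,
over the single terminal `a` (represented by `()`). -/
def exG : CFG Unit NT where
  initial := NT.S
  rules := {(NT.S, [Symbol.nonterminal NT.A, Symbol.nonterminal NT.B]),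
            (NT.A, [Symbol.nonterminal NT.C]),
            (NT.B, [Symbol.nonterminal NT.C]),
            (NT.C, [Symbol.terminal (), Symbol.nonterminal NT.C]),
            (NT.C, [])}

namespace EarleyEx

local notation "tA" => (Symbol.terminal () : Symbol Unit NT)
local notation "nS" => (Symbol.nonterminal NT.S : Symbol Unit NT)
local notation "nA" => (Symbol.nonterminal NT.A : Symbol Unit NT)
local notation "nB" => (Symbol.nonterminal NT.B : Symbol Unit NT)
local notation "nC" => (Symbol.nonterminal NT.C : Symbol Unit NT)

lemma ruleS : (NT.S, [nA, nB]) ∈ exG.rules := by simp [exG]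
lemma ruleA : (NT.A, [nC]) ∈ exG.rules := by simp [exG]
lemma ruleB : (NT.B, [nC]) ∈ exG.rules := by simp [exG]
lemma ruleC1 : (NT.C, [tA, nC]) ∈ exG.rules := by simp [exG]
lemma ruleC0 : (NT.C, ([] : List (Symbol Unit NT))) ∈ exG.rules := by simp [exG]

variable {n : ℕ}

abbrev E (n : ℕ) := Earley exG (List.replicate n ())

lemma getw {j : ℕ} (h : j < n) : (List.replicate n ())[j]? = some () := by
  simp [h]

/-- Soundness invariant. -/
lemma sound {A : NT} {α β : List (Symbol Unit NT)} {i j : ℕ}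
    (h : E n A α β i j) :
    (A, α ++ β) ∈ exG.rules ∧ j ≤ n ∧ (A = NT.S → i = 0) := by
  induction h with
  | init hr => exact ⟨hr, Nat.zero_le _, fun _ => rfl⟩
  | @predict B α A β i j γ h hr ih =>
      refine ⟨hr, ih.2.1, fun hS => ?_⟩
      subst hS
      exfalso
      have h1 := ih.1
      simp only [exG, Set.mem_insert_iff, Set.mem_singleton_iff, Prod.mk.injEq] at h1
      have hmem : nS ∈ α ++ nS :: β := by simp
      rcases h1 with ⟨_, h2⟩ | ⟨_, h2⟩ | ⟨_, h2⟩ | ⟨_, h2⟩ | ⟨_, h2⟩ <;>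
        rw [h2] at hmem <;> simp at hmem
  | @scan A α a β i j h hg ih =>
      have hj : j < n := by
        have := List.getElem?_eq_some_iff.mp hg
        simpa using this.1
      refine ⟨by simpa using ih.1, hj, ih.2.2⟩
  | @complete A α B β i k γ j h1 h2 hr ih1 ih2 =>
      refine ⟨by simpa using ih1.1, ih2.2.1, ih1.2.2⟩

lemma initItem : E n NT.S [] [nA, nB] 0 0 := Earley.init ruleS

lemma preA : E n NT.A [] [nC] 0 0 := Earley.predict initItem ruleA

/-- [C → •aC] and [C → •] in E_{j,j} for all j ≤ n. -/
lemma preC {j : ℕ} (h : j ≤ n) :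
    E n NT.C [] [tA, nC] j j ∧ E n NT.C [] [] j j := by
  induction j with
  | zero => exact ⟨Earley.predict preA ruleC1, Earley.predict preA ruleC0⟩
  | succ j ih =>
      have hj : j ≤ n := Nat.le_of_succ_le h
      have hscan : E n NT.C [tA] [nC] j (j + 1) :=
        Earley.scan (ih hj).1 (getw h)
      exact ⟨Earley.predict hscan ruleC1, Earley.predict hscan ruleC0⟩

/-- Complete C-items spanning [j, j+d]. -/
lemma Ccomp : ∀ d j, j + d ≤ n →
    ∃ γ, (NT.C, γ) ∈ exG.rules ∧ E n NT.C γ [] j (j + d) := by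
  intro d
  induction d with
  | zero => exact fun j h => ⟨[], ruleC0, (preC h).2⟩
  | succ d ih =>
      intro j h
      have hjn : j < n := by omega
      have hscan : E n NT.C [tA] [nC] j (j + 1) :=
        Earley.scan (preC (Nat.le_of_lt hjn)).1 (getw hjn)
      obtain ⟨γ, hγ, hc⟩ := ih (j + 1) (by omega)
      refine ⟨[tA, nC], ruleC1, ?_⟩
      have := Earley.complete hscan hc hγ
      simpa [show j + 1 + d = j + (d + 1) by omega] using this

lemma Acomp {k : ℕ} (h : k ≤ n) : E n NT.A [nC] [] 0 k := by
  obtain ⟨γ, hγ, hc⟩ := Ccomp k 0 (show 0 + k ≤ n by omega)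
  have := Earley.complete preA hc hγ
  simpa using this

lemma SAB {k : ℕ} (h : k ≤ n) : E n NT.S [nA] [nB] 0 k := by
  have := Earley.complete initItem (Acomp h) ruleA
  simpa using this

lemma SABdone {j : ℕ} (h : j ≤ n) : E n NT.S [nA, nB] [] 0 j := by
  have hpreB : E n NT.B [] [nC] j j := Earley.predict (SAB h) ruleB
  obtain ⟨γ, hγ, hc⟩ := Ccomp 0 j (show j + 0 ≤ n by omega)
  have hB : E n NT.B [nC] [] j j := by
    have := Earley.complete hpreB hc hγ
    simpa using this
  have := Earley.complete (SAB h) hB ruleB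
  simpa using this

end EarleyEx

/-- for input a^n, the Earley table contains the item [S → A • B]
in exactly the entries E_{0,i} with 0 ≤ i ≤ n, and the item [S → AB •] in
exactly the entries E_{0,j} with 0 ≤ j ≤ n (hence exactly n+1 of each). -/
theorem earley_example_counts (n : ℕ) :
    (∀ i j, Earley exG (List.replicate n ()) NT.S
        [Symbol.nonterminal NT.A] [Symbol.nonterminal NT.B] i j ↔ (i = 0 ∧ j ≤ n)) ∧
    (∀ i j, Earley exG (List.replicate n ()) NT.S
        [Symbol.nonterminal NT.A, Symbol.nonterminal NT.B] [] i j ↔ (i = 0 ∧ j ≤ n)) := by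
  constructor <;> intro i j <;> constructor
  · intro h
    have := EarleyEx.sound h
    exact ⟨this.2.2 rfl, this.2.1⟩
  · rintro ⟨rfl, hj⟩
    exact EarleyEx.SAB hj
  · intro h
    have := EarleyEx.sound h
    exact ⟨this.2.2 rfl, this.2.1⟩
  · rintro ⟨rfl, hj⟩
    exact EarleyEx.SABdone hj
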